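/- If T ∈ B(H) is an idempotent (T² = T), then T attains its norm if and only if T + T* − I attains its norm. -/

import Mathlib

open ContinuousLinearMap

section Stmt8Aux

variable {H : Type*} [NormedAddCommGroup H] [InnerProductSpace ℂ H] [CompleteSpace H]

local notation "⟪" x ", " y "⟫" => @inner ℂ _ _ x y

private lemma stmt8_S_apply (T : H →L[ℂ] H) (y : H) :
    (T + ContinuousLinearMap.adjoint T - 1) y = T y + ContinuousLinearMap.adjoint T y - y := by
  simp

/-- pointwise lower bound : `‖T y‖ ≤ ‖S y‖` -/
private lemma stmt8_lower (T : H →L[ℂ] H) (hT : T ∘L T = T) (y : H) :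
    ‖T y‖ ≤ ‖(T + ContinuousLinearMap.adjoint T - 1) y‖ := by
  have hTT : ∀ v : H, T (T v) = T v := fun v => by
    have := congrFun (congrArg (fun (A : H →L[ℂ] H) => (A : H → H)) hT) v
    simpa using this
  set A := ContinuousLinearMap.adjoint T with hA
  have horth : ⟪T y, y - A y⟫ = 0 := by
    rw [inner_sub_right, hA, adjoint_inner_right, hTT, sub_self]
  have hSy : (T + A - 1) y = T y - (y - A y) := by
    rw [stmt8_S_apply]; abel
  have hsq : ‖(T + A - 1) y‖ ^ 2 = ‖T y‖ ^ 2 + ‖y - A y‖ ^ 2 := by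
    rw [hSy, norm_sub_sq (𝕜 := ℂ), horth]
    simp
  nlinarith [norm_nonneg ((T + A - 1) y), norm_nonneg (T y), sq_nonneg (‖y - A y‖)]

/-- key estimate: for `b` orthogonal to the range of `T`, `‖T b‖² ≤ (‖T‖²-1)‖b‖²` -/
private lemma stmt8_perp_bound (T : H →L[ℂ] H) (ht : 1 ≤ ‖T‖)
    (b : H) (hcb : ⟪T b, b⟫ = 0) (hTTb : T (T b) = T b) :
    ‖T b‖ ^ 2 ≤ (‖T‖ ^ 2 - 1) * ‖b‖ ^ 2 := by
  set c := T b with hc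
  set t := ‖T‖ with htdef
  set γ := ‖c‖ ^ 2 with hγ
  set β := ‖b‖ ^ 2 with hβ
  have hγ0 : 0 ≤ γ := sq_nonneg _
  have hβ0 : 0 ≤ β := sq_nonneg _
  -- the family of inequalities obtained by testing on `μ • c + b`
  have key : ∀ μ : ℝ, (μ + 1) ^ 2 * γ ≤ t ^ 2 * (μ ^ 2 * γ + β) := by
    intro μ
    have h1 : T ((μ : ℂ) • c + b) = ((μ + 1 : ℝ) : ℂ) • c := by
      rw [map_add, map_smul, hTTb, ← hc]
      push_cast
      rw [add_smul, one_smul]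
    have h2 : ‖T ((μ : ℂ) • c + b)‖ ≤ t * ‖(μ : ℂ) • c + b‖ := T.le_opNorm _
    have h3 : ‖((μ + 1 : ℝ) : ℂ) • c‖ = |μ + 1| * ‖c‖ := by
      rw [norm_smul, Complex.norm_real, Real.norm_eq_abs]
    have hsm : ‖(μ : ℂ) • c‖ ^ 2 = μ ^ 2 * γ := by
      rw [norm_smul, Complex.norm_real, Real.norm_eq_abs, mul_pow, sq_abs, hγ]
    have h4 : ‖(μ : ℂ) • c + b‖ ^ 2 = μ ^ 2 * γ + β := by
      rw [norm_add_sq (𝕜 := ℂ), inner_smul_left, hcb, mul_zero, hsm]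
      simp [hβ]
    rw [h1, h3] at h2
    have h6 : (|μ + 1| * ‖c‖) ^ 2 ≤ (t * ‖(μ : ℂ) • c + b‖) ^ 2 :=
      pow_le_pow_left₀ (by positivity) h2 2
    have h5 : (|μ + 1| * ‖c‖) ^ 2 = (μ + 1) ^ 2 * γ := by
      rw [mul_pow, sq_abs, hγ]
    rw [h5, mul_pow, h4] at h6
    exact h6
  rcases eq_or_lt_of_le ht with h1 | h1
  · -- t = 1 : show γ = 0
    have hγz : γ ≤ 0 := by
      by_contra hpos
      push_neg at hpos
      have hk := key (β / (2 * γ))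
      rw [← h1] at hk
      have hμγ : β / (2 * γ) * γ = β / 2 := by field_simp
      nlinarith [hk, hpos, hβ0, hμγ]
    have hγeq : γ = 0 := le_antisymm hγz hγ0
    rw [← h1]
    nlinarith [hγeq, hβ0]
  · -- 1 < t
    set d := t ^ 2 - 1 with hd
    have hd0 : 0 < d := by nlinarith
    have hne : d ≠ 0 := ne_of_gt hd0
    set μ := 1 / d with hμ
    have hdμ : d * μ = 1 := by rw [hμ]; field_simp
    have hk : (μ + 1) ^ 2 * γ ≤ (d + 1) * (μ ^ 2 * γ + β) := by
      have ht2 : t ^ 2 = d + 1 := by rw [hd]; ring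
      rw [← ht2]; exact key μ
    have hk2 : d ^ 2 * ((μ + 1) ^ 2 * γ) ≤ d ^ 2 * ((d + 1) * (μ ^ 2 * γ + β)) :=
      mul_le_mul_of_nonneg_left hk (by positivity)
    have e1 : d ^ 2 * ((μ + 1) ^ 2 * γ) = (1 + d) ^ 2 * γ := by
      have : d * (μ + 1) = 1 + d := by rw [mul_add, hdμ, mul_one]
      calc d ^ 2 * ((μ + 1) ^ 2 * γ) = (d * (μ + 1)) ^ 2 * γ := by ring
        _ = (1 + d) ^ 2 * γ := by rw [this]
    have e2 : d ^ 2 * ((d + 1) * (μ ^ 2 * γ + β)) = (d + 1) * (γ + d ^ 2 * β) := by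
      have h2 : (d * μ) ^ 2 = 1 := by rw [hdμ]; norm_num
      calc d ^ 2 * ((d + 1) * (μ ^ 2 * γ + β))
          = (d + 1) * ((d * μ) ^ 2 * γ + d ^ 2 * β) := by ring
        _ = (d + 1) * (γ + d ^ 2 * β) := by rw [h2, one_mul]
    rw [e1, e2] at hk2
    -- (1+d)²γ ≤ (d+1)(γ + d²β)  ⟹  γ ≤ dβ
    show γ ≤ d * β
    nlinarith [hk2, hd0, hγ0, hβ0, mul_pos hd0 hd0]

/-- the main norm bound : `‖S y‖ ≤ ‖T‖ * ‖y‖` -/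
private lemma stmt8_upper (T : H →L[ℂ] H) (hT : T ∘L T = T) (ht : 1 ≤ ‖T‖) (y : H) :
    ‖(T + ContinuousLinearMap.adjoint T - 1) y‖ ≤ ‖T‖ * ‖y‖ := by
  have hTT : ∀ v : H, T (T v) = T v := fun v => by
    have := congrFun (congrArg (fun (A : H →L[ℂ] H) => (A : H → H)) hT) v
    simpa using this
  set A := ContinuousLinearMap.adjoint T with hA
  set t := ‖T‖ with htdef
  -- K = fixed points of T = range of T
  set K : Submodule ℂ H := LinearMap.ker ((1 : H →L[ℂ] H) - T).toLinearMap with hK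
  have hmemK : ∀ v : H, v ∈ K ↔ T v = v := by
    intro v
    constructor
    · intro hv
      have h0 : ((1 : H →L[ℂ] H) - T) v = 0 := hv
      have h1 : v - T v = 0 := by simpa using h0
      exact (sub_eq_zero.mp h1).symm
    · intro hv
      show ((1 : H →L[ℂ] H) - T) v = 0
      simp [hv]
  haveI : CompleteSpace K := (ContinuousLinearMap.isClosed_ker ((1 : H →L[ℂ] H) - T)).completeSpace_coe
  obtain ⟨a, haK, b, hbK, hy⟩ := K.exists_add_mem_mem_orthogonal y
  have hTa : T a = a := (hmemK a).mp haK
  have hTvK : ∀ v : H, T v ∈ K := fun v => (hmemK (T v)).mpr (hTT v)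
  have hab : ⟪a, b⟫ = 0 := (K.mem_orthogonal b).mp hbK a haK
  have hAb : A b = 0 := by
    have h0 : ⟪A b, A b⟫ = 0 := by
      rw [hA, adjoint_inner_left]
      exact inner_eq_zero_symm.mp ((K.mem_orthogonal b).mp hbK _ (hTvK _))
    exact inner_self_eq_zero.mp h0
  have hAy : A y = A a := by rw [hy, map_add, hAb, add_zero]
  have horth : ⟪A y, y - T y⟫ = 0 := by
    rw [hA, adjoint_inner_left, map_sub, hTT, sub_self, inner_zero_right]
  have hSy : (T + A - 1) y = A y - (y - T y) := by
    rw [stmt8_S_apply]; abel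
  have hsq : ‖(T + A - 1) y‖ ^ 2 = ‖A y‖ ^ 2 + ‖y - T y‖ ^ 2 := by
    rw [hSy, norm_sub_sq (𝕜 := ℂ), horth]
    simp
  have hyT : y - T y = b - T b := by
    rw [hy, map_add, hTa]; abel
  have hbTb : ⟪T b, b⟫ = 0 := (K.mem_orthogonal b).mp hbK _ (hTvK b)
  have hb2 : ‖b - T b‖ ^ 2 = ‖b‖ ^ 2 + ‖T b‖ ^ 2 := by
    rw [norm_sub_sq (𝕜 := ℂ), inner_eq_zero_symm.mp hbTb]
    simp
  have hTb : ‖T b‖ ^ 2 ≤ (t ^ 2 - 1) * ‖b‖ ^ 2 := stmt8_perp_bound T ht b hbTb (hTT b)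
  have hAnorm : ‖A‖ = t := by
    rw [hA, htdef]
    exact LinearIsometryEquiv.norm_map ContinuousLinearMap.adjoint T
  have hAa : ‖A y‖ ≤ t * ‖a‖ := by
    rw [hAy]
    calc ‖A a‖ ≤ ‖A‖ * ‖a‖ := le_opNorm _ _
      _ = t * ‖a‖ := by rw [hAnorm]
  have hy2 : ‖y‖ ^ 2 = ‖a‖ ^ 2 + ‖b‖ ^ 2 := by
    rw [hy, norm_add_sq (𝕜 := ℂ), hab]
    simp
  have final : ‖(T + A - 1) y‖ ^ 2 ≤ (t * ‖y‖) ^ 2 := by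
    rw [hsq, hyT, hb2]
    have h1 : ‖A y‖ ^ 2 ≤ t ^ 2 * ‖a‖ ^ 2 := by
      nlinarith [norm_nonneg (A y), norm_nonneg a, hAa, ht]
    nlinarith [hTb, hy2, ht, norm_nonneg b, h1]
  nlinarith [final, norm_nonneg ((T + A - 1) y), norm_nonneg y, ht,
    mul_nonneg (le_trans zero_le_one ht) (norm_nonneg y)]

/-- norm attainment gives an eigenvector of `B†B`. -/
private lemma stmt8_eigen (B : H →L[ℂ] H) (x : H) (hx : ‖x‖ = 1) (hBx : ‖B x‖ = ‖B‖) :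
    ContinuousLinearMap.adjoint B (B x) = ((‖B‖ : ℂ) ^ 2) • x := by
  set t := ‖B‖ with htdef
  have e1 : ‖ContinuousLinearMap.adjoint B (B x)‖ ≤ t ^ 2 := by
    calc ‖ContinuousLinearMap.adjoint B (B x)‖ ≤ ‖ContinuousLinearMap.adjoint B‖ * ‖B x‖ :=
          le_opNorm _ _
      _ = t * t := by
          rw [hBx, LinearIsometryEquiv.norm_map ContinuousLinearMap.adjoint B]
      _ = t ^ 2 := (sq t).symm
  have e2 : RCLike.re ⟪ContinuousLinearMap.adjoint B (B x), ((t : ℂ) ^ 2) • x⟫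
      = t ^ 2 * t ^ 2 := by
    rw [inner_smul_right, adjoint_inner_left, inner_self_eq_norm_sq_to_K, hBx]
    simp [← Complex.ofReal_pow, ← Complex.ofReal_mul]
  have e3 : ‖((t : ℂ) ^ 2) • x‖ ^ 2 = t ^ 2 * t ^ 2 := by
    rw [norm_smul, hx, mul_one]
    have : ‖(t : ℂ) ^ 2‖ = t ^ 2 := by
      rw [norm_pow, Complex.norm_real, Real.norm_eq_abs, sq_abs]
    rw [this]; ring
  have hnorm : ‖ContinuousLinearMap.adjoint B (B x) - ((t : ℂ) ^ 2) • x‖ ^ 2 ≤ 0 := by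
    rw [norm_sub_sq (𝕜 := ℂ), e2, e3]
    nlinarith [e1, norm_nonneg (ContinuousLinearMap.adjoint B (B x))]
  have h0 : ‖ContinuousLinearMap.adjoint B (B x) - ((t : ℂ) ^ 2) • x‖ ^ 2 = 0 :=
    le_antisymm hnorm (sq_nonneg _)
  have h1 : ‖ContinuousLinearMap.adjoint B (B x) - ((t : ℂ) ^ 2) • x‖ = 0 :=
    (pow_eq_zero_iff two_ne_zero).mp h0
  exact sub_eq_zero.mp (norm_eq_zero.mp h1)

/-- an eigenvector of `T†T` with eigenvalue `‖T‖²` gives norm attainment. -/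
private lemma stmt8_attain (T : H →L[ℂ] H) (x : H) (hx : x ≠ 0)
    (heq : ContinuousLinearMap.adjoint T (T x) = ((‖T‖ : ℂ) ^ 2) • x) :
    ∃ u : H, ‖u‖ = 1 ∧ ‖T u‖ = ‖T‖ := by
  set t := ‖T‖ with htdef
  have hxn : ‖x‖ ≠ 0 := norm_ne_zero_iff.mpr hx
  have h1 : ‖T x‖ ^ 2 = t ^ 2 * ‖x‖ ^ 2 := by
    have e0 := ContinuousLinearMap.apply_norm_sq_eq_inner_adjoint_right T x
    rw [ContinuousLinearMap.comp_apply, heq, inner_smul_right,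
      inner_self_eq_norm_sq_to_K] at e0
    rw [e0]
    simp [← Complex.ofReal_pow, ← Complex.ofReal_mul]
  have ht0 : 0 ≤ t := norm_nonneg T
  have hTx : ‖T x‖ = t * ‖x‖ := by
    rw [← Real.sqrt_sq (norm_nonneg (T x)), h1, ← mul_pow,
      Real.sqrt_sq (by positivity)]
  refine ⟨((‖x‖ : ℂ))⁻¹ • x, ?_, ?_⟩
  · rw [norm_smul, norm_inv, Complex.norm_real, Real.norm_eq_abs, abs_of_nonneg (norm_nonneg x)]
    field_simp
  · rw [map_smul, norm_smul, norm_inv, Complex.norm_real, Real.norm_eq_abs,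
      abs_of_nonneg (norm_nonneg x), hTx]
    field_simp

end Stmt8Aux

set_option maxHeartbeats 1000000 in
theorem stmt_8 {H : Type*} [NormedAddCommGroup H] [InnerProductSpace ℂ H] [CompleteSpace H]
    (T : H →L[ℂ] H) (hT : T ∘L T = T) :
    (∃ x : H, ‖x‖ = 1 ∧ ‖T x‖ = ‖T‖) ↔
      (∃ x : H, ‖x‖ = 1 ∧
        ‖(T + ContinuousLinearMap.adjoint T - 1) x‖ =
          ‖T + ContinuousLinearMap.adjoint T - 1‖) := by
  classical
  by_cases hT0 : T = 0
  · subst hT0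
    constructor
    · rintro ⟨x, hx, -⟩
      refine ⟨x, hx, ?_⟩
      have hnt : Nontrivial H := by
        refine ⟨⟨x, 0, fun h => ?_⟩⟩
        rw [h] at hx; simp at hx
      simp [hx, ContinuousLinearMap.norm_id]
    · rintro ⟨x, hx, -⟩
      exact ⟨x, hx, by simp⟩
  · have hTT : ∀ v : H, T (T v) = T v := fun v => by
      have := congrFun (congrArg (fun (A : H →L[ℂ] H) => (A : H → H)) hT) v
      simpa using this
    have hAA : ∀ v : H, ContinuousLinearMap.adjoint T (ContinuousLinearMap.adjoint T v)
        = ContinuousLinearMap.adjoint T v := fun v => by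
      have h := congrArg ContinuousLinearMap.adjoint hT
      rw [ContinuousLinearMap.adjoint_comp] at h
      have := congrFun (congrArg (fun (A : H →L[ℂ] H) => (A : H → H)) h) v
      simpa using this
    have htpos : 0 < ‖T‖ := norm_pos_iff.mpr hT0
    have ht : 1 ≤ ‖T‖ := by
      have h2 : ‖T‖ ≤ ‖T‖ * ‖T‖ := by
        calc ‖T‖ = ‖T ∘L T‖ := by rw [hT]
          _ ≤ ‖T‖ * ‖T‖ := ContinuousLinearMap.opNorm_comp_le T T
      nlinarith
    have hub := stmt8_upper T hT ht
    have hlb := stmt8_lower T hT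
    have hSnorm : ‖T + ContinuousLinearMap.adjoint T - 1‖ = ‖T‖ := by
      apply le_antisymm
      · exact ContinuousLinearMap.opNorm_le_bound _ (norm_nonneg T) hub
      · exact ContinuousLinearMap.opNorm_le_bound T (norm_nonneg _)
          (fun v => le_trans (hlb v) (ContinuousLinearMap.le_opNorm _ v))
    -- pointwise algebraic identities
    have hTS : ∀ v : H, T (ContinuousLinearMap.adjoint T v)
        = T ((T + ContinuousLinearMap.adjoint T - 1) v) := fun v => by
      rw [stmt8_S_apply, map_sub, map_add, hTT]
      abel
    have hAS : ∀ v : H, ContinuousLinearMap.adjoint T (T v)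
        = ContinuousLinearMap.adjoint T ((T + ContinuousLinearMap.adjoint T - 1) v) := fun v => by
      rw [stmt8_S_apply, map_sub, map_add, hAA]
      abel
    constructor
    · -- forward
      rintro ⟨x, hx1, hxT⟩
      have heig := stmt8_eigen T x hx1 hxT
      refine ⟨((‖T‖ : ℂ))⁻¹ • T x, ?_, ?_⟩
      · rw [norm_smul, hxT, norm_inv, Complex.norm_real, Real.norm_eq_abs,
          abs_of_nonneg (norm_nonneg T)]
        field_simp
      · have hcalc : (T + ContinuousLinearMap.adjoint T - 1) (((‖T‖ : ℂ))⁻¹ • T x)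
            = (((‖T‖ : ℂ))⁻¹ * (‖T‖ : ℂ) ^ 2) • x := by
          rw [map_smul, stmt8_S_apply, hTT, heig, add_sub_cancel_left, smul_smul]
        rw [hcalc, hSnorm, norm_smul, hx1, mul_one]
        have hne : (‖T‖ : ℂ) ≠ 0 := by
          exact_mod_cast ne_of_gt htpos
        have : ((‖T‖ : ℂ))⁻¹ * (‖T‖ : ℂ) ^ 2 = (‖T‖ : ℂ) := by
          field_simp
        rw [this, Complex.norm_real, Real.norm_eq_abs, abs_of_nonneg (norm_nonneg T)]
    · -- backward
      rintro ⟨y, hy1, hySnorm⟩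
      have hSadj : ContinuousLinearMap.adjoint (T + ContinuousLinearMap.adjoint T - 1)
          = T + ContinuousLinearMap.adjoint T - 1 := by
        have hone : ContinuousLinearMap.adjoint (1 : H →L[ℂ] H) = 1 := by
          rw [ContinuousLinearMap.one_def, ContinuousLinearMap.adjoint_id]
        rw [map_sub, map_add, ContinuousLinearMap.adjoint_adjoint, hone, add_comm]
      have heigS0 := stmt8_eigen (T + ContinuousLinearMap.adjoint T - 1) y hy1 hySnorm
      rw [hSadj, hSnorm] at heigS0
      -- x₁
      have hx1T : T ((‖T‖ : ℂ) • (ContinuousLinearMap.adjoint T y) + (ContinuousLinearMap.adjoint T ((T + ContinuousLinearMap.adjoint T - 1) y)))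
          = (‖T‖ : ℂ) • T ((T + ContinuousLinearMap.adjoint T - 1) y) + ((‖T‖ : ℂ) ^ 2) • T y := by
        rw [map_add, map_smul, hTS y,
          hTS ((T + ContinuousLinearMap.adjoint T - 1) y), heigS0, map_smul]
      have hx2T : T ((‖T‖ : ℂ) • (ContinuousLinearMap.adjoint T y) - (ContinuousLinearMap.adjoint T ((T + ContinuousLinearMap.adjoint T - 1) y)))
          = (‖T‖ : ℂ) • T ((T + ContinuousLinearMap.adjoint T - 1) y) - ((‖T‖ : ℂ) ^ 2) • T y := by
        rw [map_sub, map_smul, hTS y,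
          hTS ((T + ContinuousLinearMap.adjoint T - 1) y), heigS0, map_smul]
      have heig1 : ContinuousLinearMap.adjoint T (T ((‖T‖ : ℂ) • (ContinuousLinearMap.adjoint T y) + (ContinuousLinearMap.adjoint T ((T + ContinuousLinearMap.adjoint T - 1) y))))
          = ((‖T‖ : ℂ) ^ 2) • ((‖T‖ : ℂ) • (ContinuousLinearMap.adjoint T y) + (ContinuousLinearMap.adjoint T ((T + ContinuousLinearMap.adjoint T - 1) y))) := by
        rw [hx1T, map_add, map_smul, map_smul, hAS ((T + ContinuousLinearMap.adjoint T - 1) y),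
          hAS y, heigS0, map_smul]
        module
      have heig2 : ContinuousLinearMap.adjoint T (T ((‖T‖ : ℂ) • (ContinuousLinearMap.adjoint T y) - (ContinuousLinearMap.adjoint T ((T + ContinuousLinearMap.adjoint T - 1) y))))
          = ((‖T‖ : ℂ) ^ 2) • ((‖T‖ : ℂ) • (ContinuousLinearMap.adjoint T y) - (ContinuousLinearMap.adjoint T ((T + ContinuousLinearMap.adjoint T - 1) y))) := by
        rw [hx2T, map_sub, map_smul, map_smul, hAS ((T + ContinuousLinearMap.adjoint T - 1) y),
          hAS y, heigS0, map_smul]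
        module
      by_cases hx10 : (‖T‖ : ℂ) • (ContinuousLinearMap.adjoint T y) + (ContinuousLinearMap.adjoint T ((T + ContinuousLinearMap.adjoint T - 1) y)) = 0
      · by_cases hx20 : (‖T‖ : ℂ) • (ContinuousLinearMap.adjoint T y) - (ContinuousLinearMap.adjoint T ((T + ContinuousLinearMap.adjoint T - 1) y)) = 0
        · -- degenerate case : T y = 0, adjoint T y = 0
          have hsum : (2 * (‖T‖ : ℂ)) • (ContinuousLinearMap.adjoint T y) = 0 := by
            have h := congrArg₂ (· + ·) hx10 hx20
            simp only [add_zero] at h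
            rw [← h]; module
          have hs0 : (2 * (‖T‖ : ℂ)) ≠ 0 := by
            have : (‖T‖ : ℂ) ≠ 0 := by exact_mod_cast ne_of_gt htpos
            simpa using this
          have hAy0 : (ContinuousLinearMap.adjoint T y) = 0 := by
            rcases smul_eq_zero.mp hsum with h | h
            · exact absurd h hs0
            · exact h
          have hASy0 : (ContinuousLinearMap.adjoint T ((T + ContinuousLinearMap.adjoint T - 1) y)) = 0 := by
            have h := congrArg₂ (· - ·) hx10 hx20
            simp only [sub_zero] at h
            have h2 : (2 : ℂ) • (ContinuousLinearMap.adjoint T ((T + ContinuousLinearMap.adjoint T - 1) y)) = 0 := by rw [← h]; module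
            simpa using h2
          have hATy0 : ContinuousLinearMap.adjoint T (T y) = 0 := by
            rw [hAS y]; exact hASy0
          have hTy0 : T y = 0 := by
            have e : @inner ℂ _ _ y (ContinuousLinearMap.adjoint T (T y))
                = @inner ℂ _ _ (T y) (T y) := ContinuousLinearMap.adjoint_inner_right T y (T y)
            rw [hATy0, inner_zero_right] at e
            exact inner_self_eq_zero.mp e.symm
          have hSy_eq : (T + ContinuousLinearMap.adjoint T - 1) y = -y := by
            rw [stmt8_S_apply, hTy0, hAy0]
            simp
          have hT1 : ‖T‖ = 1 := by
            rw [← hSnorm, ← hySnorm, hSy_eq, norm_neg, hy1]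
          obtain ⟨u, hu⟩ : ∃ u : H, T u ≠ 0 := by
            by_contra h
            push_neg at h
            exact hT0 (ContinuousLinearMap.ext fun u => by simp [h u])
          have hTun : ‖T u‖ ≠ 0 := norm_ne_zero_iff.mpr hu
          refine ⟨((‖T u‖ : ℂ))⁻¹ • T u, ?_, ?_⟩
          · rw [norm_smul, norm_inv, Complex.norm_real, Real.norm_eq_abs,
              abs_of_nonneg (norm_nonneg (T u))]
            field_simp
          · rw [map_smul, hTT, norm_smul, norm_inv, Complex.norm_real, Real.norm_eq_abs,
              abs_of_nonneg (norm_nonneg (T u)), hT1]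
            field_simp
        · exact stmt8_attain T _ hx20 heig2
      · exact stmt8_attain T _ hx10 heig1
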